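/- Fix λ > 0, γ > 0, and p a probability distribution on ℝ^d with bounded support. Let W* be the unique positive definite solution of E_{x∼p}[(W x xᵀ W)/(1 + γ‖W x‖)] + λW = I. Then for every θ ∈ ℝ^d: E_{x∼p}|⟨x, θ⟩| ≤ (1 + √d·γ)·‖(W*)⁻¹ θ‖. -/

import Mathlib

open MeasureTheory Matrix
open scoped Classical

/-- Euclidean norm on `Fin d → ℝ`. -/
noncomputable def enorm' {d : ℕ} (v : Fin d → ℝ) : ℝ := Real.sqrt (∑ i, (v i)^2)

/-- Euclidean inner product on `Fin d → ℝ`. -/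
noncomputable def einner' {d : ℕ} (v w : Fin d → ℝ) : ℝ := ∑ i, v i * w i

/-- Operator (spectral) norm of a real matrix. -/
noncomputable def opNorm {d : ℕ} (M : Matrix (Fin d) (Fin d) ℝ) : ℝ :=
  ‖(Matrix.toEuclideanCLM (𝕜 := ℝ) M :
      EuclideanSpace ℝ (Fin d) →L[ℝ] EuclideanSpace ℝ (Fin d))‖

/-- Positive semidefinite square root (junk value `0` on non-PSD matrices). -/
noncomputable def psqrt {d : ℕ} (A : Matrix (Fin d) (Fin d) ℝ) : Matrix (Fin d) (Fin d) ℝ :=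
  if h : A.PosSemidef then
    (h.1.eigenvectorUnitary : Matrix (Fin d) (Fin d) ℝ) *
      diagonal (fun i => Real.sqrt (h.1.eigenvalues i)) *
      (star (h.1.eigenvectorUnitary : Matrix (Fin d) (Fin d) ℝ))
  else 0

/-- Entrywise expectation of a matrix-valued function. -/
noncomputable def mExp {d : ℕ} (p : Measure (Fin d → ℝ))
    (f : (Fin d → ℝ) → Matrix (Fin d) (Fin d) ℝ) : Matrix (Fin d) (Fin d) ℝ :=
  Matrix.of fun i j => ∫ x, f x i j ∂p

/-- The LDP operator `F(U) = E[(U x xᵀ U)/‖U x‖ · 1{x ≠ 0}] + λ U`. -/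
noncomputable def FLDP {d : ℕ} (p : Measure (Fin d → ℝ)) (lam : ℝ)
    (U : Matrix (Fin d) (Fin d) ℝ) : Matrix (Fin d) (Fin d) ℝ :=
  mExp p (fun x => if x = 0 then 0
    else (enorm' (U.mulVec x))⁻¹ • vecMulVec (U.mulVec x) (U.mulVec x)) + lam • U

/-- The DP operator `G(W) = E[(W x xᵀ W)/(1 + γ‖W x‖)] + λ W`. -/
noncomputable def FJDP {d : ℕ} (p : Measure (Fin d → ℝ)) (γ lam : ℝ)
    (W : Matrix (Fin d) (Fin d) ℝ) : Matrix (Fin d) (Fin d) ℝ :=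
  mExp p (fun x => (1 + γ * enorm' (W.mulVec x))⁻¹ • vecMulVec (W.mulVec x) (W.mulVec x))
    + lam • W

/-- `sym(A) = (Aᵀ A)^{1/2}`. -/
noncomputable def symMat {d : ℕ} (A : Matrix (Fin d) (Fin d) ℝ) : Matrix (Fin d) (Fin d) ℝ :=
  psqrt (Aᵀ * A)

/-- Smallest eigenvalue of a Hermitian matrix (junk value `0` otherwise). -/
noncomputable def lmin {d : ℕ} (A : Matrix (Fin d) (Fin d) ℝ) : ℝ :=
  if h : A.IsHermitian then ⨅ i, h.eigenvalues i else 0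

/-- Largest eigenvalue of a Hermitian matrix (junk value `0` otherwise). -/
noncomputable def lmax {d : ℕ} (A : Matrix (Fin d) (Fin d) ℝ) : ℝ :=
  if h : A.IsHermitian then ⨆ i, h.eigenvalues i else 0

lemma cs_integral {α : Type*} [MeasurableSpace α] {μ : Measure α} [IsFiniteMeasure μ]
    {f g : α → ℝ} (hf0 : ∀ x, 0 ≤ f x) (hg0 : ∀ x, 0 ≤ g x)
    (hf : MemLp f 2 μ) (hg : MemLp g 2 μ) :
    ∫ x, f x * g x ∂μ ≤ Real.sqrt (∫ x, f x ^ 2 ∂μ) * Real.sqrt (∫ x, g x ^ 2 ∂μ) := by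
  have h2 : Real.HolderConjugate 2 2 := Real.HolderConjugate.two_two
  have hof : ENNReal.ofReal (2:ℝ) = 2 := by norm_num
  have key := integral_mul_le_Lp_mul_Lq_of_nonneg h2
    (Filter.Eventually.of_forall hf0) (Filter.Eventually.of_forall hg0)
    (hof ▸ hf) (hof ▸ hg)
  have hr : ∀ x : ℝ, x ^ (2:ℝ) = x ^ 2 := fun x => by
    rw [show (2:ℝ) = ((2:ℕ):ℝ) by norm_num, Real.rpow_natCast]
  simp only [hr] at key
  calc ∫ x, f x * g x ∂μ ≤ (∫ a, f a ^ 2 ∂μ) ^ (1/(2:ℝ)) * (∫ a, g a ^ 2 ∂μ) ^ (1/(2:ℝ)) := key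
    _ = _ := by rw [Real.sqrt_eq_rpow, Real.sqrt_eq_rpow]

lemma abs_sum_le_sqrt {d : ℕ} (v w : Fin d → ℝ) :
    |∑ i, v i * w i| ≤ Real.sqrt (∑ i, (v i)^2) * Real.sqrt (∑ i, (w i)^2) := by
  rw [← Real.sqrt_sq_eq_abs, ← Real.sqrt_mul (by positivity)]
  exact Real.sqrt_le_sqrt (Finset.sum_mul_sq_le_sq_mul_sq _ _ _)

/-- auxiliary scalar weight -/
noncomputable def qf {d : ℕ} (γ : ℝ) (W : Matrix (Fin d) (Fin d) ℝ) (x : Fin d → ℝ) : ℝ :=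
  (1 + γ * enorm' (W.mulVec x))⁻¹

set_option maxHeartbeats 1000000 in
/-- For the solution `W*` of `FJDP(W) = I`,
`E|⟨x,θ⟩| ≤ (1 + √d·γ)‖(W*)⁻¹ θ‖`. -/
theorem stmt8 {d : ℕ} (p : Measure (Fin d → ℝ)) [IsProbabilityMeasure p]
    (hbdd : ∃ R : ℝ, ∀ᵐ x ∂p, enorm' x ≤ R)
    (lam γ : ℝ) (hlam : 0 < lam) (hγ : 0 < γ)
    (Wstar : Matrix (Fin d) (Fin d) ℝ) (hWpd : Wstar.PosDef)
    (hfix : FJDP p γ lam Wstar = 1)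
    (huniq : ∀ W : Matrix (Fin d) (Fin d) ℝ, W.PosDef → FJDP p γ lam W = 1 → W = Wstar)
    (θ : Fin d → ℝ) :
    (∫ x, |einner' x θ| ∂p) ≤ (1 + Real.sqrt d * γ) * enorm' (Wstar⁻¹.mulVec θ) := by
  classical
  obtain ⟨R, hR⟩ := hbdd
  -- basic positivity facts
  have hnf0 : ∀ x : Fin d → ℝ, 0 ≤ enorm' (Wstar.mulVec x) := fun x => Real.sqrt_nonneg _
  have hden : ∀ x : Fin d → ℝ, 0 < 1 + γ * enorm' (Wstar.mulVec x) := fun x => by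
    nlinarith [hnf0 x]
  have hden1 : ∀ x : Fin d → ℝ, 1 ≤ 1 + γ * enorm' (Wstar.mulVec x) := fun x => by
    nlinarith [hnf0 x]
  have hq0 : ∀ x, 0 < qf γ Wstar x := fun x => inv_pos.mpr (hden x)
  have hq1 : ∀ x, qf γ Wstar x ≤ 1 := fun x => inv_le_one_of_one_le₀ (hden1 x)
  have hnfsq : ∀ x : Fin d → ℝ, enorm' (Wstar.mulVec x) ^ 2 = ∑ i, (Wstar.mulVec x i)^2 :=
    fun x => Real.sq_sqrt (by positivity)
  have habs : ∀ (x : Fin d → ℝ) i, |Wstar.mulVec x i| ≤ enorm' (Wstar.mulVec x) := fun x i => by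
    rw [← Real.sqrt_sq_eq_abs, enorm']
    exact Real.sqrt_le_sqrt (Finset.single_le_sum
      (f := fun i => (Wstar.mulVec x i)^2) (fun j _ => sq_nonneg _) (Finset.mem_univ i))
  -- continuity
  have hvcont : ∀ i, Continuous (fun x : Fin d → ℝ => Wstar.mulVec x i) := fun i => by
    simpa [Matrix.mulVec, dotProduct] using
      (continuous_finset_sum Finset.univ fun j _ => continuous_const.mul (continuous_apply j) (M := ℝ))
  have hnfcont : Continuous (fun x : Fin d → ℝ => enorm' (Wstar.mulVec x)) := by
    simp only [enorm']
    exact Real.continuous_sqrt.comp (continuous_finset_sum Finset.univ fun i _ => (hvcont i).pow 2)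
  have hDcont : Continuous (fun x : Fin d → ℝ => 1 + γ * enorm' (Wstar.mulVec x)) :=
    continuous_const.add (continuous_const.mul hnfcont)
  have hqcont : Continuous (fun x => qf γ Wstar x) := by
    simp only [qf]
    exact hDcont.inv₀ fun x => (hden x).ne'
  -- uniform bound M on enorm' (Wstar.mulVec x)
  have hK0 : (0:ℝ) ≤ Real.sqrt (∑ i, ∑ j, (Wstar i j)^2) := Real.sqrt_nonneg _
  have hfK : ∀ x : Fin d → ℝ,
      enorm' (Wstar.mulVec x) ≤ Real.sqrt (∑ i, ∑ j, (Wstar i j)^2) * enorm' x := fun x => by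
    rw [enorm', enorm', ← Real.sqrt_mul (by positivity)]
    apply Real.sqrt_le_sqrt
    calc ∑ i, (Wstar.mulVec x i)^2 ≤ ∑ i, ((∑ j, (Wstar i j)^2) * (∑ j, (x j)^2)) := by
          refine Finset.sum_le_sum fun i _ => ?_
          simpa [Matrix.mulVec, dotProduct] using
            Finset.sum_mul_sq_le_sq_mul_sq Finset.univ (fun j => Wstar i j) x
      _ = (∑ i, ∑ j, (Wstar i j)^2) * (∑ j, (x j)^2) := by rw [Finset.sum_mul]
  set M : ℝ := Real.sqrt (∑ i, ∑ j, (Wstar i j)^2) * max R 0 with hMdef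
  have hM0 : 0 ≤ M := mul_nonneg hK0 (le_max_right _ _)
  have hfM : ∀ᵐ x ∂p, enorm' (Wstar.mulVec x) ≤ M := by
    filter_upwards [hR] with x hx
    exact (hfK x).trans (mul_le_mul_of_nonneg_left (hx.trans (le_max_left _ _)) hK0)
  -- integrability of entries
  have hIntEntry : ∀ i j, Integrable
      (fun x => qf γ Wstar x * (Wstar.mulVec x i * Wstar.mulVec x j)) p := by
    intro i j
    refine (integrable_const (M * M)).mono'
      ((hqcont.mul ((hvcont i).mul (hvcont j))).aestronglyMeasurable) ?_
    filter_upwards [hfM] with x hx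
    have h1 : |Wstar.mulVec x i| ≤ M := (habs x i).trans hx
    have h2 : |Wstar.mulVec x j| ≤ M := (habs x j).trans hx
    have hqa : |qf γ Wstar x| ≤ 1 := by rw [abs_of_pos (hq0 x)]; exact hq1 x
    calc ‖qf γ Wstar x * (Wstar.mulVec x i * Wstar.mulVec x j)‖
        = |qf γ Wstar x| * (|Wstar.mulVec x i| * |Wstar.mulVec x j|) := by
          rw [Real.norm_eq_abs, abs_mul, abs_mul]
      _ ≤ 1 * (M * M) := by
          refine mul_le_mul hqa (mul_le_mul h1 h2 (abs_nonneg _) ((abs_nonneg _).trans h1))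
            (by positivity) one_pos.le
      _ = M * M := one_mul _
  -- entrywise fixed point
  have hentry : ∀ i j,
      (∫ x, qf γ Wstar x * (Wstar.mulVec x i * Wstar.mulVec x j) ∂p) + lam * Wstar i j
        = (1 : Matrix (Fin d) (Fin d) ℝ) i j := by
    intro i j
    have h := congrArg (fun M : Matrix (Fin d) (Fin d) ℝ => M i j) hfix
    simpa [FJDP, mExp, qf, Matrix.add_apply, Matrix.smul_apply, Matrix.vecMulVec_apply,
      smul_eq_mul] using h
  -- quadratic form identity
  have hquad : ∀ w : Fin d → ℝ,
      (∫ x, qf γ Wstar x * (∑ i, Wstar.mulVec x i * w i)^2 ∂p) + lam * (w ⬝ᵥ Wstar.mulVec w)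
        = ∑ i, (w i)^2 := by
    intro w
    have hIJ : ∀ i j : Fin d, Integrable
        (fun x => w i * w j * (qf γ Wstar x * (Wstar.mulVec x i * Wstar.mulVec x j))) p :=
      fun i j => (hIntEntry i j).const_mul _
    have expand : ∑ i, ∑ j, w i * w j *
          ((∫ x, qf γ Wstar x * (Wstar.mulVec x i * Wstar.mulVec x j) ∂p) + lam * Wstar i j)
        = (∫ x, qf γ Wstar x * (∑ i, Wstar.mulVec x i * w i)^2 ∂p)
          + lam * (w ⬝ᵥ Wstar.mulVec w) := by
      simp only [mul_add, Finset.sum_add_distrib]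
      congr 1
      · have e1 : ∀ i j, w i * w j *
            (∫ x, qf γ Wstar x * (Wstar.mulVec x i * Wstar.mulVec x j) ∂p)
            = ∫ x, w i * w j * (qf γ Wstar x * (Wstar.mulVec x i * Wstar.mulVec x j)) ∂p :=
          fun i j => (integral_const_mul _ _).symm
        simp only [e1]
        have e2 : ∀ i : Fin d, ∑ j, (∫ x, w i * w j *
              (qf γ Wstar x * (Wstar.mulVec x i * Wstar.mulVec x j)) ∂p)
            = ∫ x, ∑ j, w i * w j *
              (qf γ Wstar x * (Wstar.mulVec x i * Wstar.mulVec x j)) ∂p :=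
          fun i => (integral_finset_sum _ fun j _ => hIJ i j).symm
        simp only [e2]
        rw [← integral_finset_sum _ fun i _ => integrable_finset_sum _ fun j _ => hIJ i j]
        refine integral_congr_ae (Filter.Eventually.of_forall fun x => ?_)
        dsimp only
        rw [pow_two, Finset.sum_mul_sum, Finset.mul_sum]
        refine Finset.sum_congr rfl fun i _ => ?_
        rw [Finset.mul_sum]
        exact Finset.sum_congr rfl fun j _ => by ring
      · simp only [dotProduct, Matrix.mulVec, Finset.mul_sum]
        exact Finset.sum_congr rfl fun i _ => Finset.sum_congr rfl fun j _ => by ring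
    calc (∫ x, qf γ Wstar x * (∑ i, Wstar.mulVec x i * w i)^2 ∂p)
          + lam * (w ⬝ᵥ Wstar.mulVec w)
        = ∑ i, ∑ j, w i * w j * ((1 : Matrix (Fin d) (Fin d) ℝ) i j) := by
          rw [← expand]
          exact Finset.sum_congr rfl fun i _ => Finset.sum_congr rfl fun j _ => by
            rw [hentry i j]
      _ = ∑ i, (w i)^2 := by
          refine Finset.sum_congr rfl fun i _ => ?_
          simp [Matrix.one_apply, mul_ite, Finset.sum_ite_eq, sq]
  -- positivity of the quadratic form of Wstar
  have hpsd : ∀ w : Fin d → ℝ, 0 ≤ w ⬝ᵥ Wstar.mulVec w := fun w => by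
    have := hWpd.posSemidef.re_dotProduct_nonneg w
    simpa using this
  -- single-vector computations
  have hsingle_v : ∀ (y : Fin d → ℝ) (i : Fin d), (∑ j, y j * (Pi.single i 1 : Fin d → ℝ) j) = y i := by
    intro y i
    simp [Pi.single_apply, mul_ite, Finset.sum_ite_eq]
  have hsingle_dot : ∀ i : Fin d,
      (Pi.single i 1 : Fin d → ℝ) ⬝ᵥ Wstar.mulVec (Pi.single i 1) = Wstar i i := by
    intro i
    simp [dotProduct, Matrix.mulVec, Pi.single_apply, mul_ite, ite_mul,
      Finset.sum_ite_eq, Finset.sum_ite_eq']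
  have hsingle_sq : ∀ i : Fin d, (∑ j, ((Pi.single i 1 : Fin d → ℝ) j)^2) = 1 := by
    intro i
    simp [Pi.single_apply, ite_pow, Finset.sum_ite_eq]
  have hdiagIneq : ∀ i : Fin d,
      (∫ x, qf γ Wstar x * (Wstar.mulVec x i)^2 ∂p) + lam * Wstar i i = 1 := by
    intro i
    have h := hquad (Pi.single i 1)
    simp only [hsingle_v, hsingle_dot i, hsingle_sq i] at h
    exact h
  have hIntDiag : ∀ i : Fin d, Integrable (fun x => qf γ Wstar x * (Wstar.mulVec x i)^2) p := by
    intro i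
    simpa [pow_two] using hIntEntry i i
  have hdiag0 : ∀ i : Fin d, 0 ≤ Wstar i i := fun i => by
    have := hpsd (Pi.single i 1)
    rwa [hsingle_dot i] at this
  -- trace identity
  have htr : (∫ x, qf γ Wstar x * enorm' (Wstar.mulVec x)^2 ∂p) + lam * (∑ i, Wstar i i)
      = (d : ℝ) := by
    have hs : ∑ i : Fin d, ((∫ x, qf γ Wstar x * (Wstar.mulVec x i)^2 ∂p) + lam * Wstar i i)
        = (d : ℝ) := by simp [hdiagIneq]
    rw [Finset.sum_add_distrib, ← Finset.mul_sum,
      ← integral_finset_sum _ (fun i _ => hIntDiag i)] at hs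
    rw [← hs]
    congr 1
    refine integral_congr_ae (Filter.Eventually.of_forall fun x => ?_)
    dsimp only
    rw [hnfsq x, Finset.mul_sum]
  -- T and its bounds
  set T : ℝ := ∫ x, qf γ Wstar x * enorm' (Wstar.mulVec x)^2 ∂p with hTdef
  have hT0 : 0 ≤ T := integral_nonneg fun x => mul_nonneg (hq0 x).le (sq_nonneg _)
  have hdiagsum0 : 0 ≤ ∑ i, Wstar i i := Finset.sum_nonneg fun i _ => hdiag0 i
  have hTd : T ≤ (d:ℝ) := by nlinarith [mul_nonneg hlam.le hdiagsum0]
  -- the vector u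
  set u : Fin d → ℝ := Wstar⁻¹.mulVec θ with hu
  have henu0 : 0 ≤ enorm' u := Real.sqrt_nonneg _
  have hWu : Wstar.mulVec u = θ := by
    rw [hu, Matrix.mulVec_mulVec,
      Matrix.mul_nonsing_inv _ (isUnit_iff_ne_zero.mpr hWpd.det_pos.ne'), Matrix.one_mulVec]
  have hsym : ∀ i j, Wstar i j = Wstar j i := by
    intro i j
    have h := congrFun (congrFun hWpd.isHermitian i) j
    simpa [Matrix.conjTranspose_apply] using h.symm
  have hgθ : ∀ x : Fin d → ℝ, einner' x θ = ∑ i, Wstar.mulVec x i * u i := by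
    intro x
    rw [einner', ← hWu]
    simp only [Matrix.mulVec, dotProduct, Finset.mul_sum, Finset.sum_mul]
    rw [Finset.sum_comm]
    exact Finset.sum_congr rfl fun i _ => Finset.sum_congr rfl fun j _ => by
      rw [hsym j i]; ring
  -- the quantity A
  set A : ℝ := ∫ x, qf γ Wstar x * (∑ i, Wstar.mulVec x i * u i)^2 ∂p with hAdef
  have hA0 : 0 ≤ A := integral_nonneg fun x => mul_nonneg (hq0 x).le (sq_nonneg _)
  have hAle : A ≤ ∑ i, (u i)^2 := by
    have h := hquad u
    nlinarith [mul_nonneg hlam.le (hpsd u)]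
  have hsqA : Real.sqrt A ≤ enorm' u := by
    rw [enorm']
    exact Real.sqrt_le_sqrt hAle
  -- integrability of the norm
  have hIntf : Integrable (fun x => enorm' (Wstar.mulVec x)) p := by
    refine (integrable_const M).mono' hnfcont.aestronglyMeasurable ?_
    filter_upwards [hfM] with x hx
    rw [Real.norm_eq_abs, abs_of_nonneg (hnf0 x)]; exact hx
  set s : ℝ := ∫ x, enorm' (Wstar.mulVec x) ∂p with hsdef
  have hs0 : 0 ≤ s := integral_nonneg fun x => hnf0 x
  have hDint : (∫ x, (1 + γ * enorm' (Wstar.mulVec x)) ∂p) = 1 + γ * s := by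
    rw [integral_add (integrable_const 1) (hIntf.const_mul γ), integral_const_mul, integral_const]
    simp [hsdef]
  have hsqrtD1 : ∀ x : Fin d → ℝ, 1 ≤ Real.sqrt (1 + γ * enorm' (Wstar.mulVec x)) := fun x => by
    simpa using Real.sqrt_le_sqrt (hden1 x)
  have hsqrtD0 : ∀ x : Fin d → ℝ, (0:ℝ) < Real.sqrt (1 + γ * enorm' (Wstar.mulVec x)) :=
    fun x => lt_of_lt_of_le one_pos (hsqrtD1 x)
  have hsqrtDcont : Continuous
      (fun x : Fin d → ℝ => Real.sqrt (1 + γ * enorm' (Wstar.mulVec x))) :=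
    Real.continuous_sqrt.comp hDcont
  -- Memℒp facts
  have hm2 : MemLp (fun x : Fin d → ℝ => Real.sqrt (1 + γ * enorm' (Wstar.mulVec x))) 2 p := by
    refine MemLp.of_bound hsqrtDcont.aestronglyMeasurable (Real.sqrt (1 + γ * M)) ?_
    filter_upwards [hfM] with x hx
    rw [Real.norm_eq_abs, abs_of_nonneg (Real.sqrt_nonneg _)]
    exact Real.sqrt_le_sqrt (by nlinarith)
  have hm1 : MemLp (fun x : Fin d → ℝ =>
      enorm' (Wstar.mulVec x) / Real.sqrt (1 + γ * enorm' (Wstar.mulVec x))) 2 p := by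
    refine MemLp.of_bound
      ((hnfcont.div hsqrtDcont fun x => (hsqrtD0 x).ne')).aestronglyMeasurable M ?_
    filter_upwards [hfM] with x hx
    rw [Real.norm_eq_abs, abs_of_nonneg (div_nonneg (hnf0 x) (Real.sqrt_nonneg _))]
    exact (div_le_self (hnf0 x) (hsqrtD1 x)).trans hx
  have hgcont : Continuous (fun x : Fin d → ℝ => ∑ i, Wstar.mulVec x i * u i) :=
    continuous_finset_sum _ fun i _ => (hvcont i).mul continuous_const
  have hgabs : ∀ x : Fin d → ℝ,
      |∑ i, Wstar.mulVec x i * u i| ≤ enorm' (Wstar.mulVec x) * enorm' u := fun x => by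
    rw [enorm', enorm']
    exact abs_sum_le_sqrt _ _
  have hm3 : MemLp (fun x : Fin d → ℝ =>
      |∑ i, Wstar.mulVec x i * u i| / Real.sqrt (1 + γ * enorm' (Wstar.mulVec x))) 2 p := by
    refine MemLp.of_bound
      ((hgcont.abs.div hsqrtDcont fun x => (hsqrtD0 x).ne')).aestronglyMeasurable
      (M * enorm' u) ?_
    filter_upwards [hfM] with x hx
    rw [Real.norm_eq_abs, abs_of_nonneg (div_nonneg (abs_nonneg _) (Real.sqrt_nonneg _))]
    refine (div_le_self (abs_nonneg _) (hsqrtD1 x)).trans ((hgabs x).trans ?_)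
    exact mul_le_mul_of_nonneg_right hx henu0
  -- first Cauchy-Schwarz: s ≤ √T √(1+γs)
  have cs1 := cs_integral (μ := p)
    (f := fun x => enorm' (Wstar.mulVec x) / Real.sqrt (1 + γ * enorm' (Wstar.mulVec x)))
    (g := fun x => Real.sqrt (1 + γ * enorm' (Wstar.mulVec x)))
    (fun x => div_nonneg (hnf0 x) (Real.sqrt_nonneg _)) (fun x => Real.sqrt_nonneg _) hm1 hm2
  have e1 : (∫ x, (enorm' (Wstar.mulVec x) / Real.sqrt (1 + γ * enorm' (Wstar.mulVec x)))
        * Real.sqrt (1 + γ * enorm' (Wstar.mulVec x)) ∂p) = s := by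
    rw [hsdef]
    refine integral_congr_ae (Filter.Eventually.of_forall fun x => ?_)
    exact div_mul_cancel₀ _ (hsqrtD0 x).ne'
  have e2 : (∫ x, (enorm' (Wstar.mulVec x) / Real.sqrt (1 + γ * enorm' (Wstar.mulVec x)))^2 ∂p)
      = T := by
    rw [hTdef]
    refine integral_congr_ae (Filter.Eventually.of_forall fun x => ?_)
    dsimp only
    rw [div_pow, Real.sq_sqrt (hden x).le]
    simp only [qf]
    rw [div_eq_mul_inv, mul_comm]
  have e3 : (∫ x, (Real.sqrt (1 + γ * enorm' (Wstar.mulVec x)))^2 ∂p) = 1 + γ * s := by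
    rw [← hDint]
    refine integral_congr_ae (Filter.Eventually.of_forall fun x => ?_)
    exact Real.sq_sqrt (hden x).le
  rw [e1, e2, e3] at cs1
  have hsd : Real.sqrt T ≤ Real.sqrt d := Real.sqrt_le_sqrt hTd
  set t : ℝ := Real.sqrt (1 + γ * s) with htdef
  have ht0 : 0 ≤ t := Real.sqrt_nonneg _
  have hγs : 0 ≤ γ * s := mul_nonneg hγ.le hs0
  have ht1 : 1 ≤ t := by
    rw [htdef]
    simpa using Real.sqrt_le_sqrt (by linarith : (1:ℝ) ≤ 1 + γ * s)
  have hts : s ≤ Real.sqrt d * t := cs1.trans (mul_le_mul_of_nonneg_right hsd ht0)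
  have ht2 : t^2 ≤ 1 + γ * (Real.sqrt d * t) := by
    rw [htdef, Real.sq_sqrt (by linarith : (0:ℝ) ≤ 1 + γ * s)]
    have := mul_le_mul_of_nonneg_left hts hγ.le
    linarith
  have htle : t ≤ 1 + Real.sqrt d * γ := by
    by_contra hcon
    push_neg at hcon
    nlinarith [mul_pos (sub_pos.mpr hcon) (lt_of_lt_of_le one_pos ht1)]
  -- second Cauchy-Schwarz
  have cs2 := cs_integral (μ := p)
    (f := fun x => |∑ i, Wstar.mulVec x i * u i| / Real.sqrt (1 + γ * enorm' (Wstar.mulVec x)))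
    (g := fun x => Real.sqrt (1 + γ * enorm' (Wstar.mulVec x)))
    (fun x => div_nonneg (abs_nonneg _) (Real.sqrt_nonneg _)) (fun x => Real.sqrt_nonneg _)
    hm3 hm2
  have f1 : (∫ x, (|∑ i, Wstar.mulVec x i * u i| / Real.sqrt (1 + γ * enorm' (Wstar.mulVec x)))
        * Real.sqrt (1 + γ * enorm' (Wstar.mulVec x)) ∂p)
      = ∫ x, |∑ i, Wstar.mulVec x i * u i| ∂p := by
    refine integral_congr_ae (Filter.Eventually.of_forall fun x => ?_)
    exact div_mul_cancel₀ _ (hsqrtD0 x).ne'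
  have f2 : (∫ x, (|∑ i, Wstar.mulVec x i * u i|
        / Real.sqrt (1 + γ * enorm' (Wstar.mulVec x)))^2 ∂p) = A := by
    rw [hAdef]
    refine integral_congr_ae (Filter.Eventually.of_forall fun x => ?_)
    dsimp only
    rw [div_pow, Real.sq_sqrt (hden x).le, sq_abs]
    simp only [qf]
    rw [div_eq_mul_inv, mul_comm]
  rw [f1, f2, e3] at cs2
  -- conclusion
  calc (∫ x, |einner' x θ| ∂p) = ∫ x, |∑ i, Wstar.mulVec x i * u i| ∂p := by
        refine integral_congr_ae (Filter.Eventually.of_forall fun x => ?_)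
        dsimp only
        rw [hgθ x]
    _ ≤ Real.sqrt A * t := cs2
    _ ≤ enorm' u * (1 + Real.sqrt d * γ) := mul_le_mul hsqA htle ht0 henu0
    _ = (1 + Real.sqrt d * γ) * enorm' u := mul_comm _ _
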